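/- Let N : {1,2,…} → ℚ be a sequence with N_1 = 1. Then N satisfies the recursion N_{d+1} = Σ_{k=1}^{d} ((2d)!/k!) Σ_{a_1+…+a_k = d, a_i > 0} Π_{i=1}^{k} ( a_i² · N_{a_i} / (2a_i)! ) for all d ≥ 1 if and only if it satisfies the recursion N_d = Σ_{k+l=d, k,l>0} N_k · N_l · k² · C(2d−3, 2k−1) for all d ≥ 2. -/

import Mathlib

open Finset

section GWAux
open PowerSeries
noncomputable section

def cseq (N : ℕ → ℚ) (j : ℕ) : ℚ := (j : ℚ) ^ 2 * N j / (Nat.factorial (2 * j) : ℚ)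

def fps (N : ℕ → ℚ) : PowerSeries ℚ := PowerSeries.mk (cseq N)

def gps (N : ℕ → ℚ) (M : ℕ) : PowerSeries ℚ :=
  ∑ k ∈ Finset.range (M + 1), PowerSeries.C ((Nat.factorial k : ℚ)⁻¹) * (fps N) ^ k

lemma cseq_zero (N : ℕ → ℚ) : cseq N 0 = 0 := by simp [cseq]

def tupToFinsupp (k : ℕ) (x : Fin k → ℕ) : ℕ →₀ ℕ :=
  Finsupp.onFinset (Finset.range k) (fun n => if h : n < k then x ⟨n, h⟩ else 0)
    (by intro n hn; by_contra h; simp only [Finset.mem_range] at h; simp [h] at hn)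

lemma coeff_fpow (N : ℕ → ℚ) (k d : ℕ) :
    PowerSeries.coeff d ((fps N) ^ k) =
      ∑ x ∈ Finset.Nat.antidiagonalTuple k d, ∏ i, cseq N (x i) := by
  rw [PowerSeries.coeff_pow]
  refine Finset.sum_nbij' (fun l => fun i : Fin k => l i) (fun x => tupToFinsupp k x)
    ?_ ?_ ?_ ?_ ?_
  · intro l hl
    simp only [Finset.mem_finsuppAntidiag] at hl
    simp only [Finset.Nat.mem_antidiagonalTuple]
    rw [← hl.1, Finset.sum_range fun i => l i]
  · intro x hx
    simp only [Finset.Nat.mem_antidiagonalTuple] at hx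
    simp only [Finset.mem_finsuppAntidiag]
    refine ⟨?_, Finsupp.support_onFinset_subset⟩
    rw [← hx, Finset.sum_range (fun n => _)]
    exact Finset.sum_congr rfl fun i _ => by
      simp only [tupToFinsupp, Finsupp.onFinset_apply, i.isLt, dif_pos, Fin.eta]
  · intro l hl
    simp only [Finset.mem_finsuppAntidiag] at hl
    ext j
    simp only [tupToFinsupp, Finsupp.onFinset_apply]
    split
    · rfl
    · next h =>
      by_contra hne
      exact h (Finset.mem_range.mp (hl.2 (Finsupp.mem_support_iff.mpr fun hz => hne hz.symm)))
  · intro x hx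
    ext i
    simp only [tupToFinsupp, Finsupp.onFinset_apply, i.isLt, dif_pos, Fin.eta]
  · intro l hl
    rw [← Fin.prod_univ_eq_prod_range (fun i => PowerSeries.coeff (l i) (fps N))]
    exact Finset.prod_congr rfl fun i _ => by simp [fps]

lemma coeff_fpow_of_lt (N : ℕ → ℚ) {k d : ℕ} (h : d < k) :
    PowerSeries.coeff d ((fps N) ^ k) = 0 := by
  rw [coeff_fpow]
  refine Finset.sum_eq_zero fun x hx => ?_
  simp only [Finset.Nat.mem_antidiagonalTuple] at hx
  have : ∃ i, x i = 0 := by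
    by_contra hc
    push_neg at hc
    have : k ≤ d := by
      calc k = ∑ _i : Fin k, 1 := by simp
      _ ≤ ∑ i, x i := Finset.sum_le_sum fun i _ => Nat.one_le_iff_ne_zero.mpr (hc i)
      _ = d := hx
    omega
  obtain ⟨i, hi⟩ := this
  exact Finset.prod_eq_zero (Finset.mem_univ i) (by rw [hi, cseq_zero])

lemma coeff_gps (N : ℕ → ℚ) {d M : ℕ} (h : d ≤ M) :
    PowerSeries.coeff d (gps N M) = PowerSeries.coeff d (gps N d) := by
  unfold gps
  rw [map_sum, map_sum]
  symm
  refine Finset.sum_subset (by intro a ha; simp only [Finset.mem_range] at *; omega) ?_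
  intro k hk hk'
  simp only [Finset.mem_range, not_lt] at hk'
  rw [PowerSeries.coeff_C_mul, coeff_fpow_of_lt N (by omega), mul_zero]

lemma gps_zero (N : ℕ → ℚ) : gps N 0 = 1 := by
  simp [gps]

lemma coeff_zero_gps (N : ℕ → ℚ) (M : ℕ) : PowerSeries.coeff 0 (gps N M) = 1 := by
  rw [coeff_gps N (Nat.zero_le M), gps_zero]
  simp

lemma deriv_gps (N : ℕ → ℚ) (M : ℕ) :
    PowerSeries.derivative ℚ (gps N (M + 1)) =
      PowerSeries.derivative ℚ (fps N) * gps N M := by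
  unfold gps
  rw [map_sum, Finset.sum_range_succ' _ (M + 1), Finset.mul_sum]
  have h0 : PowerSeries.derivative ℚ (PowerSeries.C ((Nat.factorial 0 : ℚ)⁻¹) * fps N ^ 0) = 0 := by
    simp
  rw [h0, add_zero]
  refine Finset.sum_congr rfl fun i _ => ?_
  rw [Derivation.leibniz, PowerSeries.derivative_C, smul_zero, add_zero,
    Derivation.leibniz_pow]
  simp only [smul_eq_mul, nsmul_eq_mul, Nat.add_sub_cancel]
  have hc : (PowerSeries.C) ((Nat.factorial (i+1) : ℚ)⁻¹) * ((i+1 : ℕ) : ℚ⟦X⟧) =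
      PowerSeries.C ((Nat.factorial i : ℚ)⁻¹) := by
    rw [show ((i + 1 : ℕ) : ℚ⟦X⟧) = PowerSeries.C ((i+1:ℕ):ℚ) from (map_natCast _ _).symm,
      ← map_mul]
    congr 1
    rw [Nat.factorial_succ]
    push_cast
    field_simp
  linear_combination (fps N ^ i * PowerSeries.derivative ℚ (fps N)) * hc

lemma key_identity (N : ℕ → ℚ) (d : ℕ) :
    ((d + 1 : ℕ) : ℚ) * PowerSeries.coeff (d + 1) (gps N (d + 1)) =
      ∑ i ∈ Finset.range (d + 1),
        (((i + 1 : ℕ) : ℚ) * cseq N (i + 1)) * PowerSeries.coeff (d - i) (gps N (d - i)) := by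
  have h1 : PowerSeries.coeff d (PowerSeries.derivative ℚ (gps N (d + 1))) =
      PowerSeries.coeff (d + 1) (gps N (d + 1)) * ((d + 1 : ℕ) : ℚ) := by
    rw [PowerSeries.coeff_derivative]
    push_cast
    ring
  rw [mul_comm, ← h1, deriv_gps, PowerSeries.coeff_mul,
    Finset.Nat.sum_antidiagonal_eq_sum_range_succ_mk]
  refine Finset.sum_congr rfl fun i hi => ?_
  simp only [Finset.mem_range] at hi
  rw [PowerSeries.coeff_derivative, coeff_gps N (show d - i ≤ d by omega)]
  congr 1
  · rw [fps, PowerSeries.coeff_mk]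
    push_cast
    ring

lemma RA_eq (N : ℕ → ℚ) {d : ℕ} (hd : 1 ≤ d) :
    (∑ k ∈ Finset.Icc 1 d,
        ((Nat.factorial (2 * d) : ℚ) / (Nat.factorial k : ℚ)) *
          ∑ c ∈ (Finset.Nat.antidiagonalTuple k d).filter (fun c => ∀ i, 0 < c i),
            ∏ i, ((c i : ℚ)) ^ 2 * N (c i) / (Nat.factorial (2 * c i) : ℚ))
    = (Nat.factorial (2 * d) : ℚ) * PowerSeries.coeff d (gps N d) := by
  have hfil : ∀ k : ℕ,
      (∑ c ∈ (Finset.Nat.antidiagonalTuple k d).filter (fun c => ∀ i, 0 < c i),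
        ∏ i, ((c i : ℚ)) ^ 2 * N (c i) / (Nat.factorial (2 * c i) : ℚ))
      = ∑ x ∈ Finset.Nat.antidiagonalTuple k d, ∏ i, cseq N (x i) := by
    intro k
    rw [Finset.sum_subset (Finset.filter_subset _ _) ?_]
    · exact Finset.sum_congr rfl fun x _ => Finset.prod_congr rfl fun i _ => by simp [cseq]
    · intro x hx hx'
      have : ∃ i, x i = 0 := by
        by_contra hc
        push_neg at hc
        exact hx' (Finset.mem_filter.mpr ⟨hx, fun i => Nat.pos_of_ne_zero (hc i)⟩)
      obtain ⟨i, hi⟩ := this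
      exact Finset.prod_eq_zero (Finset.mem_univ i) (by rw [hi]; simp)
  rw [gps, map_sum]
  rw [← Finset.sum_subset (show Finset.Icc 1 d ⊆ Finset.range (d + 1) by
      intro a ha; simp only [Finset.mem_Icc] at ha; simp only [Finset.mem_range]; omega) ?_]
  · rw [Finset.mul_sum]
    refine Finset.sum_congr rfl fun k hk => ?_
    rw [hfil, PowerSeries.coeff_C_mul, coeff_fpow]
    rw [div_eq_mul_inv]
    ring
  · intro k hk hk'
    have hk0 : k = 0 := by
      simp only [Finset.mem_range] at hk
      simp only [Finset.mem_Icc] at hk'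
      omega
    subst hk0
    rw [PowerSeries.coeff_C_mul, coeff_fpow]
    obtain ⟨d', rfl⟩ : ∃ d', d = d' + 1 := ⟨d - 1, by omega⟩
    rw [Finset.Nat.antidiagonalTuple_zero_succ]
    simp

lemma term_id {D k : ℕ} (h1 : 1 ≤ k) (hk : k ≤ D) (a b : ℚ) :
    (Nat.factorial (2*D) : ℚ) / (D : ℚ) * ((k:ℚ) * ((k:ℚ)^2 * a / (Nat.factorial (2*k) : ℚ))) *
      (b / (Nat.factorial (2*(D-k)) : ℚ))
    = a * b * (k:ℚ)^2 * (Nat.choose (2*D-1) (2*k-1) : ℚ) := by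
  have hle : 2*k-1 ≤ 2*D-1 := by omega
  rw [Nat.cast_choose ℚ hle]
  have h2 : (2*D-1) - (2*k-1) = 2*(D-k) := by omega
  rw [h2]
  have e1 : (Nat.factorial (2*D) : ℚ) = (2*D : ℕ) * Nat.factorial (2*D-1) := by
    rw [← Nat.cast_mul, Nat.mul_factorial_pred (by omega)]
  have e2 : (Nat.factorial (2*k) : ℚ) = (2*k : ℕ) * Nat.factorial (2*k-1) := by
    rw [← Nat.cast_mul, Nat.mul_factorial_pred (by omega)]
  rw [e1, e2]
  have hD : (D:ℚ) ≠ 0 := Nat.cast_ne_zero.mpr (by omega)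
  have hk0 : (k:ℚ) ≠ 0 := Nat.cast_ne_zero.mpr (by omega)
  have f1 : (Nat.factorial (2*D-1) : ℚ) ≠ 0 := Nat.cast_ne_zero.mpr (Nat.factorial_ne_zero _)
  have f2 : (Nat.factorial (2*k-1) : ℚ) ≠ 0 := Nat.cast_ne_zero.mpr (Nat.factorial_ne_zero _)
  have f3 : (Nat.factorial (2*(D-k)) : ℚ) ≠ 0 := Nat.cast_ne_zero.mpr (Nat.factorial_ne_zero _)
  field_simp
  push_cast
  ring

lemma core (N : ℕ → ℚ) (hN1 : N 1 = 1) {d : ℕ} (hd : 1 ≤ d)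
    (hA : ∀ m : ℕ, 1 ≤ m → m < d →
      N (m + 1) = ∑ k ∈ Finset.Icc 1 m,
        ((Nat.factorial (2 * m) : ℚ) / (Nat.factorial k : ℚ)) *
          ∑ c ∈ (Finset.Nat.antidiagonalTuple k m).filter (fun c => ∀ i, 0 < c i),
            ∏ i, ((c i : ℚ)) ^ 2 * N (c i) / (Nat.factorial (2 * c i) : ℚ)) :
    (∑ k ∈ Finset.Icc 1 d,
        ((Nat.factorial (2 * d) : ℚ) / (Nat.factorial k : ℚ)) *
          ∑ c ∈ (Finset.Nat.antidiagonalTuple k d).filter (fun c => ∀ i, 0 < c i),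
            ∏ i, ((c i : ℚ)) ^ 2 * N (c i) / (Nat.factorial (2 * c i) : ℚ))
    = ∑ k ∈ Finset.Ico 1 (d + 1),
        N k * N (d + 1 - k) * (k : ℚ) ^ 2 *
          (Nat.choose (2 * (d + 1) - 3) (2 * k - 1) : ℚ) := by
  obtain ⟨e, rfl⟩ : ∃ e, d = e + 1 := ⟨d - 1, by omega⟩
  have hE : ∀ j : ℕ, j ≤ e →
      PowerSeries.coeff j (gps N j) = N (j + 1) / (Nat.factorial (2 * j) : ℚ) := by
    intro j hj
    rcases Nat.eq_zero_or_pos j with rfl | hj1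
    · rw [coeff_zero_gps]
      simp [hN1]
    · rw [hA j hj1 (by omega), RA_eq N hj1]
      rw [mul_comm, mul_div_assoc, div_self (Nat.cast_ne_zero.mpr (Nat.factorial_ne_zero _)),
        mul_one]
  rw [RA_eq N hd]
  have hkey := key_identity N e
  have hd' : ((e + 1 : ℕ) : ℚ) ≠ 0 := Nat.cast_ne_zero.mpr (by omega)
  have hcoeff : PowerSeries.coeff (e + 1) (gps N (e + 1)) =
      (∑ i ∈ Finset.range (e + 1),
        (((i + 1 : ℕ) : ℚ) * cseq N (i + 1)) *
          PowerSeries.coeff (e - i) (gps N (e - i))) / ((e + 1 : ℕ) : ℚ) := by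
    rw [← hkey, mul_comm, mul_div_assoc, div_self hd', mul_one]
  rw [hcoeff, ← mul_div_assoc, Finset.mul_sum, Finset.sum_div]
  rw [show (2 * (e + 1 + 1) - 3) = 2 * (e + 1) - 1 by omega]
  rw [Finset.sum_Ico_eq_sum_range]
  rw [show (e + 1 + 1 - 1) = e + 1 by omega]
  refine Finset.sum_congr rfl fun i hi => ?_
  simp only [Finset.mem_range] at hi
  rw [hE (e - i) (by omega)]
  rw [cseq]
  have h1k : 1 ≤ 1 + i := by omega
  have hkD : 1 + i ≤ e + 1 := by omega
  have := term_id (D := e + 1) (k := 1 + i) h1k hkD (N (1 + i)) (N (e - i + 1))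
  rw [show (1 + i) = i + 1 by omega] at this ⊢
  rw [show (e + 1) - (i + 1) = e - i by omega] at this
  rw [show (e + 1 + 1) - (i + 1) = e - i + 1 by omega]
  linear_combination this


end
end GWAux

/-- A sequence `N` in `ℚ` with `N 1 = 1` satisfies
`N_{d+1} = Σ_{k=1}^d ((2d)!/k!) Σ_{a_1+…+a_k=d, a_i>0} Π_i a_i²·N_{a_i}/(2a_i)!`
for all `d ≥ 1` iff it satisfies
`N_d = Σ_{k+l=d, k,l>0} N_k·N_l·k²·C(2d−3,2k−1)` for all `d ≥ 2`. -/
theorem gw_recursions_equivalent (N : ℕ → ℚ) (hN1 : N 1 = 1) :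
    (∀ d : ℕ, 1 ≤ d →
      N (d + 1) = ∑ k ∈ Finset.Icc 1 d,
        ((Nat.factorial (2 * d) : ℚ) / (Nat.factorial k : ℚ)) *
          ∑ c ∈ (Finset.Nat.antidiagonalTuple k d).filter (fun c => ∀ i, 0 < c i),
            ∏ i, ((c i : ℚ)) ^ 2 * N (c i) / (Nat.factorial (2 * c i) : ℚ))
    ↔ (∀ d : ℕ, 2 ≤ d →
      N d = ∑ k ∈ Finset.Ico 1 d,
        N k * N (d - k) * (k : ℚ) ^ 2 *
          (Nat.choose (2 * d - 3) (2 * k - 1) : ℚ)) := by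
  constructor
  · intro hA d hd
    obtain ⟨m, rfl⟩ : ∃ m, d = m + 1 := ⟨d - 1, by omega⟩
    have hm : 1 ≤ m := by omega
    rw [hA m hm]
    exact core N hN1 hm (fun k hk1 hk2 => hA k hk1)
  · intro hB d
    induction d using Nat.strong_induction_on with
    | _ d ih =>
      intro hd
      rw [hB (d + 1) (by omega)]
      exact (core N hN1 hd (fun m hm1 hm2 => ih m hm2 hm1)).symm
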